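/- Cumulant scaling for the Edgeworth expansion: let Z_1, …, Z_r be independent identically distributed real random variables on a probability space (Ω, 𝓕, μ), each with mean m and standard deviation σ > 0, set Z' := (Z_1 − m)/σ and X := (1/√r)·Σ_{i=1}^{r} (Z_i − m)/σ, and assume there exists δ > 0 such that ω ↦ exp(s·Z'(ω)) is μ-integrable for every s with |s| ≤ δ. Then for every l ≥ 1, the l-th cumulant of X satisfies iteratedDeriv l (cgf X μ) 0 = r^{1 − l/2} · iteratedDeriv l (cgf Z' μ) 0; in particular κ_{X,1} = 0, κ_{X,2} = 1, and κ_{X,l} = ν_l / r^{l/2 − 1} for l ≥ 3, where ν_l is the l-th cumulant of Z'. -/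

import Mathlib

open MeasureTheory ProbabilityTheory Real

section EdgeworthHelpers
open Filter Topology

lemma edge_key_bound (n : ℕ) {ε : ℝ} (hε : 0 < ε) (s y : ℝ) :
    |y| ^ n * exp (s * y) ≤ ((n.factorial : ℝ) / ε ^ n) * (exp ((s + ε) * y) + exp ((s - ε) * y)) := by
  have h1 : |y| ^ n ≤ (n.factorial : ℝ) / ε ^ n * exp (ε * |y|) := by
    have h := Real.pow_div_factorial_le_exp _ (mul_nonneg hε.le (abs_nonneg y)) n
    rw [mul_pow, div_le_iff₀ (by positivity)] at h
    rw [div_mul_eq_mul_div, le_div_iff₀ (by positivity)]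
    nlinarith [h]
  have h2 : exp (ε * |y|) * exp (s * y) ≤ exp ((s + ε) * y) + exp ((s - ε) * y) := by
    rw [← Real.exp_add]
    rcases le_total 0 y with hy | hy
    · rw [abs_of_nonneg hy, show ε * y + s * y = (s + ε) * y by ring]
      exact le_add_of_nonneg_right (exp_pos _).le
    · rw [abs_of_nonpos hy, show ε * -y + s * y = (s - ε) * y by ring]
      exact le_add_of_nonneg_left (exp_pos _).le
  calc |y| ^ n * exp (s * y)
      ≤ ((n.factorial : ℝ) / ε ^ n * exp (ε * |y|)) * exp (s * y) :=
        mul_le_mul_of_nonneg_right h1 (exp_pos _).le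
    _ = (n.factorial : ℝ) / ε ^ n * (exp (ε * |y|) * exp (s * y)) := by ring
    _ ≤ _ := mul_le_mul_of_nonneg_left h2 (by positivity)

lemma edge_exp_bound {u t ε y : ℝ} (hu : |u - t| ≤ ε) :
    exp (u * y) ≤ exp ((t + ε) * y) + exp ((t - ε) * y) := by
  rcases abs_le.mp hu with ⟨h1, h2⟩
  rcases le_total 0 y with hy | hy
  · exact le_trans (by gcongr <;> linarith) (le_add_of_nonneg_right (exp_pos _).le)
  · refine le_trans ?_ (le_add_of_nonneg_left (exp_pos _).le)
    exact exp_le_exp.mpr (by nlinarith)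

section

variable {Ω : Type*} [MeasurableSpace Ω] {μ : Measure Ω} [IsProbabilityMeasure μ]
  {Y : Ω → ℝ} {δ : ℝ}

lemma edge_integrable_abs (hY : Measurable Y) (hδ : 0 < δ)
    (hint : ∀ s : ℝ, |s| ≤ δ → Integrable (fun ω => Real.exp (s * Y ω)) μ)
    (n : ℕ) {s : ℝ} (hs : |s| < δ) :
    Integrable (fun ω => |Y ω| ^ n * exp (s * Y ω)) μ := by
  set ε := δ - |s| with hεdef
  have hε : 0 < ε := by simp only [hεdef]; linarith
  have habs : ∀ a : ℝ, |a| ≤ ε → Integrable (fun ω => exp ((s + a) * Y ω)) μ := by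
    intro a ha
    refine hint _ (abs_le.mpr ⟨?_, ?_⟩) <;> rcases abs_le.mp ha with ⟨h1, h2⟩ <;>
      rcases abs_lt.mp hs with ⟨h3, h4⟩ <;> rcases le_or_gt 0 s with h5 | h5 <;>
      [rw [abs_of_nonneg h5] at hεdef; rw [abs_of_neg h5] at hεdef;
       rw [abs_of_nonneg h5] at hεdef; rw [abs_of_neg h5] at hεdef] <;> linarith
  have h1 : Integrable (fun ω => exp ((s + ε) * Y ω)) μ := habs ε (by rw [abs_of_pos hε])
  have h2 : Integrable (fun ω => exp ((s - ε) * Y ω)) μ := by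
    have := habs (-ε) (by rw [abs_neg, abs_of_pos hε])
    simpa [sub_eq_add_neg] using this
  have hbound : Integrable
      (fun ω => ((n.factorial : ℝ) / ε ^ n) * (exp ((s + ε) * Y ω) + exp ((s - ε) * Y ω))) μ :=
    (h1.add h2).const_mul _
  refine hbound.mono ?_ (ae_of_all _ fun ω => ?_)
  · exact (((hY.abs.pow_const n).mul ((hY.const_mul s).exp)).aestronglyMeasurable)
  · show ‖|Y ω| ^ n * exp (s * Y ω)‖ ≤
        ‖(n.factorial : ℝ) / ε ^ n * (exp ((s + ε) * Y ω) + exp ((s - ε) * Y ω))‖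
    rw [Real.norm_eq_abs, Real.norm_eq_abs,
      abs_of_nonneg (a := |Y ω| ^ n * exp (s * Y ω)) (by positivity),
      abs_of_nonneg (a := (n.factorial : ℝ) / ε ^ n * (exp ((s + ε) * Y ω) + exp ((s - ε) * Y ω)))
        (by positivity)]
    exact edge_key_bound n hε s (Y ω)

lemma edge_integrable (hY : Measurable Y) (hδ : 0 < δ)
    (hint : ∀ s : ℝ, |s| ≤ δ → Integrable (fun ω => Real.exp (s * Y ω)) μ)
    (n : ℕ) {s : ℝ} (hs : |s| < δ) :
    Integrable (fun ω => Y ω ^ n * exp (s * Y ω)) μ := by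
  refine (edge_integrable_abs hY hδ hint n hs).mono
    (((hY.pow_const n).mul ((hY.const_mul s).exp)).aestronglyMeasurable)
    (ae_of_all _ fun ω => ?_)
  show ‖Y ω ^ n * exp (s * Y ω)‖ ≤ ‖|Y ω| ^ n * exp (s * Y ω)‖
  simp [Real.norm_eq_abs, abs_mul, abs_pow, abs_abs]

lemma edge_hasDerivAt (hY : Measurable Y) (hδ : 0 < δ)
    (hint : ∀ s : ℝ, |s| ≤ δ → Integrable (fun ω => Real.exp (s * Y ω)) μ)
    (n : ℕ) {t : ℝ} (ht : |t| < δ) :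
    HasDerivAt (fun u => ∫ ω, Y ω ^ n * exp (u * Y ω) ∂μ)
      (∫ ω, Y ω ^ (n + 1) * exp (t * Y ω) ∂μ) t := by
  set ε := (δ - |t|) / 2 with hεdef
  have hε : 0 < ε := by simp only [hεdef]; linarith
  have htε : |t + ε| < δ ∧ |t - ε| < δ := by
    constructor <;> rw [abs_lt] <;> rcases abs_lt.mp ht with ⟨h3, h4⟩ <;>
      rcases le_or_gt 0 t with h5 | h5 <;>
      [rw [abs_of_nonneg h5] at hεdef; rw [abs_of_neg h5] at hεdef;
       rw [abs_of_nonneg h5] at hεdef; rw [abs_of_neg h5] at hεdef] <;>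
      constructor <;> linarith
  have key := hasDerivAt_integral_of_dominated_loc_of_deriv_le (F := fun u ω => Y ω ^ n * exp (u * Y ω))
    (F' := fun u ω => Y ω ^ (n + 1) * exp (u * Y ω))
    (bound := fun ω => |Y ω| ^ (n + 1) * exp ((t + ε) * Y ω) + |Y ω| ^ (n + 1) * exp ((t - ε) * Y ω))
    (μ := μ) (x₀ := t) (Metric.ball_mem_nhds t hε)
    (Eventually.of_forall fun u =>
      (((hY.pow_const n).mul ((hY.const_mul u).exp)).aestronglyMeasurable))
    (edge_integrable hY hδ hint n ht)
    (((hY.pow_const (n+1)).mul ((hY.const_mul t).exp)).aestronglyMeasurable)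
    (ae_of_all _ fun ω u hu => ?_)
    ((edge_integrable_abs hY hδ hint (n+1) htε.1).add (edge_integrable_abs hY hδ hint (n+1) htε.2))
    (ae_of_all _ fun ω u _ => ?_)
  · exact key.2
  · show ‖Y ω ^ (n + 1) * exp (u * Y ω)‖ ≤
      |Y ω| ^ (n + 1) * exp ((t + ε) * Y ω) + |Y ω| ^ (n + 1) * exp ((t - ε) * Y ω)
    rw [Real.norm_eq_abs, abs_mul, abs_pow, abs_of_nonneg (exp_pos _).le, ← mul_add]
    have hexp : exp (u * Y ω) ≤ exp ((t + ε) * Y ω) + exp ((t - ε) * Y ω) :=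
      edge_exp_bound (le_of_lt (by simpa [Real.dist_eq] using Metric.mem_ball.mp hu))
    exact mul_le_mul_of_nonneg_left hexp (by positivity)
  · have h1 : HasDerivAt (fun u => exp (u * Y ω)) (exp (u * Y ω) * Y ω) u :=
      (hasDerivAt_mul_const (Y ω)).exp
    have := h1.const_mul (Y ω ^ n)
    exact this.congr_deriv (by ring)

lemma edge_cgf_deriv_one (hY : Measurable Y) (hδ : 0 < δ)
    (hint : ∀ s : ℝ, |s| ≤ δ → Integrable (fun ω => Real.exp (s * Y ω)) μ) :
    iteratedDeriv 1 (cgf Y μ) 0 = ∫ ω, Y ω ∂μ := by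
  have h0 : |(0:ℝ)| < δ := by simpa using hδ
  have hmgf : HasDerivAt (mgf Y μ) (∫ ω, Y ω ^ 1 * exp (0 * Y ω) ∂μ) 0 := by
    have := edge_hasDerivAt hY hδ hint 0 h0
    have e : mgf Y μ = fun u => ∫ ω, Y ω ^ 0 * exp (u * Y ω) ∂μ := by funext u; simp [mgf]
    rw [e]; exact this
  have hpos : mgf Y μ 0 = 1 := mgf_zero
  have hlog : HasDerivAt (cgf Y μ) ((∫ ω, Y ω ^ 1 * exp (0 * Y ω) ∂μ) / mgf Y μ 0) 0 := by
    have e : cgf Y μ = fun u => Real.log (mgf Y μ u) := rfl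
    rw [e]; exact hmgf.log (by rw [hpos]; norm_num)
  rw [iteratedDeriv_one, hlog.deriv, hpos]
  simp

lemma edge_cgf_deriv_two (hY : Measurable Y) (hδ : 0 < δ)
    (hint : ∀ s : ℝ, |s| ≤ δ → Integrable (fun ω => Real.exp (s * Y ω)) μ) :
    iteratedDeriv 2 (cgf Y μ) 0 = (∫ ω, Y ω ^ 2 ∂μ) - (∫ ω, Y ω ∂μ) ^ 2 := by
  have h0 : |(0:ℝ)| < δ := by simpa using hδ
  set g : ℕ → ℝ → ℝ := fun n u => ∫ ω, Y ω ^ n * exp (u * Y ω) ∂μ with hg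
  have hmgf : ∀ t, mgf Y μ t = g 0 t := by
    intro t; simp [hg, mgf]
  have hgderiv : ∀ n : ℕ, ∀ t : ℝ, |t| < δ → HasDerivAt (g n) (g (n+1) t) t :=
    fun n t ht => edge_hasDerivAt hY hδ hint n ht
  -- on the ball, deriv (cgf Y μ) = g 1 / g 0
  have hball : ∀ t : ℝ, |t| < δ → HasDerivAt (cgf Y μ) (g 1 t / g 0 t) t := by
    intro t ht
    have hpos : 0 < mgf Y μ t := mgf_pos (hint t ht.le)
    have h := ((hgderiv 0 t ht).congr_deriv rfl).log (by rw [← hmgf]; exact hpos.ne')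
    have hc : cgf Y μ = fun u => Real.log (g 0 u) := by
      funext u; rw [cgf, hmgf]
    rw [hc]
    simpa [hmgf] using h
  have heq : deriv (cgf Y μ) =ᶠ[𝓝 (0:ℝ)] fun t => g 1 t / g 0 t := by
    filter_upwards [Metric.ball_mem_nhds (0:ℝ) hδ] with t ht
    exact (hball t (by simpa [Real.dist_eq] using Metric.mem_ball.mp ht)).deriv
  have hq : HasDerivAt (fun t => g 1 t / g 0 t)
      ((g 2 0 * g 0 0 - g 1 0 * g 1 0) / g 0 0 ^ 2) 0 := by
    exact (hgderiv 1 0 h0).div (hgderiv 0 0 h0) (by rw [← hmgf]; rw [mgf_zero]; norm_num)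
  have h00 : g 0 0 = 1 := by rw [← hmgf, mgf_zero]
  rw [show (2:ℕ) = 1 + 1 by rfl, iteratedDeriv_succ, iteratedDeriv_one,
    heq.deriv_eq, hq.deriv, h00]
  have h1 : g 1 0 = ∫ ω, Y ω ∂μ := by simp [hg]
  have h2 : g 2 0 = ∫ ω, Y ω ^ 2 ∂μ := by simp [hg]
  rw [h1, h2]; ring

end

lemma edge_deriv_comp_const_mul (f : ℝ → ℝ) (a c : ℝ) (hc : c ≠ 0) (t : ℝ) :
    deriv (fun x => a * f (c * x)) t = a * c * deriv f (c * t) := by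
  rcases eq_or_ne a 0 with rfl | ha
  · simp
  by_cases hf : DifferentiableAt ℝ f (c * t)
  · have h1 : HasDerivAt (fun x => f (c * x)) (c * deriv f (c * t)) t := by
      have h := (hf.hasDerivAt.comp t ((hasDerivAt_id t).const_mul c))
      simpa [mul_comm, Function.comp_def] using h
    rw [(h1.const_mul a).deriv]; ring
  · have hnd : ¬ DifferentiableAt ℝ (fun x => a * f (c * x)) t := by
      intro h
      apply hf
      have hφ : DifferentiableAt ℝ (fun y : ℝ => c⁻¹ * y) (c * t) :=
        by fun_prop
      have hcomp := DifferentiableAt.comp (c * t)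
        (by simpa [inv_mul_cancel_left₀ hc] using h) hφ
      have hrw : ((fun x => a * f (c * x)) ∘ fun y : ℝ => c⁻¹ * y) = fun y => a * f y := by
        funext y; simp [Function.comp, mul_inv_cancel_left₀ hc]
      rw [hrw] at hcomp
      have := hcomp.const_mul a⁻¹
      simpa [inv_mul_cancel_left₀ ha] using this
    rw [deriv_zero_of_not_differentiableAt hnd, deriv_zero_of_not_differentiableAt hf]
    ring

lemma edge_iteratedDeriv_scale (c : ℝ) (hc : c ≠ 0) (l : ℕ) :
    ∀ (f : ℝ → ℝ) (a x : ℝ),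
      iteratedDeriv l (fun t => a * f (c * t)) x = a * c ^ l * iteratedDeriv l f (c * x) := by
  induction l with
  | zero => intro f a x; simp
  | succ n ih =>
    intro f a x
    rw [iteratedDeriv_succ', iteratedDeriv_succ']
    have hd : deriv (fun t => a * f (c * t)) = fun t => (a * c) * deriv f (c * t) :=
      funext fun t => edge_deriv_comp_const_mul f a c hc t
    rw [hd, ih (deriv f) (a * c) x]
    ring

lemma edge_pow (r : ℕ) (hr : 0 < r) (l : ℕ) :
    (r : ℝ) * ((Real.sqrt r)⁻¹) ^ l = (r : ℝ) ^ ((1 : ℝ) - (l : ℝ) / 2) := by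
  have hrpos : (0 : ℝ) < r := Nat.cast_pos.mpr hr
  have h2 : ((Real.sqrt (r : ℝ))⁻¹ : ℝ) ^ l = (r : ℝ) ^ (-(1 / 2) * (l : ℝ)) := by
    rw [Real.sqrt_eq_rpow, ← Real.rpow_neg hrpos.le,
      ← Real.rpow_natCast ((r : ℝ) ^ (-(1 / 2 : ℝ))) l, ← Real.rpow_mul hrpos.le]
  rw [h2, show ((1 : ℝ) - (l : ℝ) / 2) = 1 + -(1 / 2) * (l : ℝ) by ring, Real.rpow_add hrpos,
    Real.rpow_one]

end EdgeworthHelpers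

open Filter Topology in

/-- Cumulant scaling for the Edgeworth expansion: for i.i.d. random variables
`Z_1, …, Z_r` with mean `m` and standard deviation `σ > 0`, setting
`Z' = (Z_1 - m)/σ` and `X = (1/√r) Σ_i (Z_i - m)/σ`, and assuming the mgf of `Z'`
exists near `0`, the cumulants `κ_{X,l} = iteratedDeriv l (cgf X μ) 0` satisfy
`κ_{X,l} = r^(1 - l/2) ν_l` for `l ≥ 1`; in particular `κ_{X,1} = 0`,
`κ_{X,2} = 1` and `κ_{X,l} = ν_l / r^(l/2 - 1)` for `l ≥ 3`, where `ν_l` is the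
`l`-th cumulant of `Z'`. -/
theorem edgeworth_cumulant_scaling
    {Ω : Type*} [MeasurableSpace Ω] {μ : Measure Ω} [IsProbabilityMeasure μ]
    (r : ℕ) (hr : 0 < r) (Z : Fin r → Ω → ℝ) (hmeas : ∀ i, Measurable (Z i))
    (hindep : iIndepFun Z μ)
    (hident : ∀ i, IdentDistrib (Z i) (Z ⟨0, hr⟩) μ μ)
    (m σ : ℝ) (hσ : 0 < σ)
    (hmean : ∀ i, ∫ ω, Z i ω ∂μ = m)
    (hsd : ∀ i, ∫ ω, (Z i ω - m) ^ 2 ∂μ = σ ^ 2)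
    (Z' X : Ω → ℝ)
    (hZ' : Z' = fun ω => (Z ⟨0, hr⟩ ω - m) / σ)
    (hX : X = fun ω => (1 / Real.sqrt r) * ∑ i, (Z i ω - m) / σ)
    (hint : ∃ δ > (0 : ℝ), ∀ s : ℝ, |s| ≤ δ →
      Integrable (fun ω => Real.exp (s * Z' ω)) μ) :
    (∀ l : ℕ, 1 ≤ l →
      iteratedDeriv l (cgf X μ) 0 =
        (r : ℝ) ^ ((1 : ℝ) - (l : ℝ) / 2) * iteratedDeriv l (cgf Z' μ) 0) ∧
    iteratedDeriv 1 (cgf X μ) 0 = 0 ∧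
    iteratedDeriv 2 (cgf X μ) 0 = 1 ∧
    (∀ l : ℕ, 3 ≤ l →
      iteratedDeriv l (cgf X μ) 0 =
        iteratedDeriv l (cgf Z' μ) 0 / (r : ℝ) ^ ((l : ℝ) / 2 - 1)) := by
  obtain ⟨δ, hδ, hint⟩ := hint
  have hrpos : (0 : ℝ) < r := Nat.cast_pos.mpr hr
  have hsqrt : 0 < Real.sqrt r := Real.sqrt_pos.mpr hrpos
  set c : ℝ := (Real.sqrt r)⁻¹ with hcdef
  have hcpos : 0 < c := inv_pos.mpr hsqrt
  have hc : c ≠ 0 := hcpos.ne'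
  have hZ'meas : Measurable Z' := by
    rw [hZ']; exact ((hmeas _).sub_const m).div_const σ
  -- the rescaled summands
  set φ : ℝ → ℝ := fun x => c * ((x - m) / σ) with hφdef
  have hφm : Measurable φ := ((measurable_id.sub_const m).div_const σ).const_mul c
  set W : Fin r → Ω → ℝ := fun i => φ ∘ Z i with hWdef
  have hWindep : iIndepFun W μ := hindep.comp _ fun _ => hφm
  have hWmeas : ∀ i, Measurable (W i) := fun i => hφm.comp (hmeas i)
  have hXsum : X = ∑ i, W i := by
    rw [hX]
    funext ω
    simp only [Finset.sum_apply, Finset.mul_sum]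
    refine Finset.sum_congr rfl fun i _ => ?_
    simp [hWdef, hφdef, one_div, hcdef]
  have hexpident : ∀ (i : Fin r) (s : ℝ),
      IdentDistrib (fun ω => Real.exp (s * ((Z i ω - m) / σ)))
        (fun ω => Real.exp (s * Z' ω)) μ μ := by
    intro i s
    rw [hZ']
    exact (hident i).comp
      ((((measurable_id.sub_const m).div_const σ).const_mul s).exp)
  have hWexp : ∀ (i : Fin r) (t : ℝ),
      (fun ω => Real.exp (t * W i ω)) = fun ω => Real.exp ((c * t) * ((Z i ω - m) / σ)) := by
    intro i t
    funext ω
    simp only [hWdef, Function.comp_apply, hφdef]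
    ring_nf
  -- eventual equality of cgf's near 0
  have hevent : cgf X μ =ᶠ[𝓝 (0 : ℝ)] fun t => (r : ℝ) * cgf Z' μ (c * t) := by
    filter_upwards [Metric.ball_mem_nhds (0 : ℝ) (by positivity : 0 < δ * Real.sqrt r)] with t ht
    have ht' : |t| < δ * Real.sqrt r := by simpa [Real.dist_eq] using Metric.mem_ball.mp ht
    have htc : |c * t| ≤ δ := by
      rw [abs_mul, abs_of_pos hcpos]
      calc c * |t| ≤ c * (δ * Real.sqrt r) := by
            exact mul_le_mul_of_nonneg_left ht'.le hcpos.le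
        _ = δ := by rw [hcdef]; field_simp
    have hti : ∀ i : Fin r, Integrable (fun ω => Real.exp (t * W i ω)) μ := by
      intro i
      rw [hWexp i t]
      exact ((hexpident i (c * t)).integrable_iff).mpr (hint _ htc)
    rw [hXsum, hWindep.cgf_sum hWmeas fun i _ => hti i]
    have hcgfW : ∀ i : Fin r, cgf (W i) μ t = cgf Z' μ (c * t) := by
      intro i
      rw [cgf, cgf]
      congr 1
      rw [mgf, mgf, hWexp i t]
      exact (hexpident i (c * t)).integral_eq
    rw [Finset.sum_congr rfl fun i _ => hcgfW i]
    simp [Finset.card_univ, mul_comm]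
  -- the scaling identity for all l
  have hmain : ∀ l : ℕ, iteratedDeriv l (cgf X μ) 0 =
      (r : ℝ) ^ ((1 : ℝ) - (l : ℝ) / 2) * iteratedDeriv l (cgf Z' μ) 0 := by
    intro l
    rw [hevent.iteratedDeriv_eq l, edge_iteratedDeriv_scale c hc l (cgf Z' μ) (r : ℝ) 0,
      mul_zero, ← edge_pow r hr l]
  -- integrability and moments of Z'
  have hZ'int : Integrable Z' μ := by
    have h := edge_integrable hZ'meas hδ hint 1 (s := 0) (by simpa using hδ)
    simpa using h
  have hZ0int : Integrable (Z ⟨0, hr⟩) μ := by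
    have hzz : Z ⟨0, hr⟩ = fun ω => σ * Z' ω + m := by
      funext ω; rw [hZ']; field_simp; ring
    rw [hzz]
    exact (hZ'int.const_mul σ).add (integrable_const m)
  have hm0 : ∫ ω, Z' ω ∂μ = 0 := by
    rw [hZ']
    rw [show (fun ω => (Z ⟨0, hr⟩ ω - m) / σ) = fun ω => (Z ⟨0, hr⟩ ω - m) * σ⁻¹ by
      funext ω; rw [div_eq_mul_inv]]
    rw [integral_mul_const, integral_sub hZ0int (integrable_const m), hmean, integral_const,
      probReal_univ, one_smul, sub_self, zero_mul]
  have hm2 : ∫ ω, Z' ω ^ 2 ∂μ = 1 := by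
    rw [hZ']
    rw [show (fun ω => ((Z ⟨0, hr⟩ ω - m) / σ) ^ 2) = fun ω => (Z ⟨0, hr⟩ ω - m) ^ 2 * (σ ^ 2)⁻¹ by
      funext ω; rw [div_pow, div_eq_mul_inv]]
    rw [integral_mul_const, hsd, mul_inv_cancel₀ (pow_ne_zero 2 hσ.ne')]
  refine ⟨fun l _ => hmain l, ?_, ?_, fun l hl => ?_⟩
  · rw [hmain 1, edge_cgf_deriv_one hZ'meas hδ hint, hm0, mul_zero]
  · rw [hmain 2, edge_cgf_deriv_two hZ'meas hδ hint, hm0, hm2]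
    norm_num
  · rw [hmain l, show (1 : ℝ) - (l : ℝ) / 2 = -((l : ℝ) / 2 - 1) by ring,
      Real.rpow_neg hrpos.le, inv_mul_eq_div]
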